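/- Closed form for the weighted, repeated-argument, double, less-than sum: for every tuple (x_0, …, x_q) of real numbers and every real τ, one has Σ_{0 ≤ i ≤ j ≤ q} x_i · e^{-τ[x_0, …, x_q, x_i, x_j]} = (τ² x_0 / 2) · e^{-τ[x_0, …, x_q]} + (τ²/2) · e^{-τ[x_1, …, x_q]} − Σ_{i=1}^{q} i · e^{-τ[x_0, …, x_q, x_i]} when q ≥ 1, and equals (τ² x_0 / 2) e^{-τ x_0} when q = 0. -/

import Mathlib

open scoped BigOperators

/-- Complete homogeneous symmetric polynomial of degree `m` in the entries of the list `l`: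
`h_m(x_0, …, x_q) = Σ_{k_0+⋯+k_q = m} x_0^{k_0}⋯x_q^{k_q}` (with `h_0 = 1`). -/
noncomputable def hsymm (l : List ℝ) (m : ℕ) : ℝ :=
  ∑ k ∈ Finset.Nat.antidiagonalTuple l.length m, ∏ i : Fin l.length, l.get i ^ k i

/-- Divided difference of the exponential `e^{t[x_0, …, x_q]}` over the tuple given by the
list `l` (of length `q+1`), defined by its (absolutely convergent) series
`Σ_{m=0}^∞ (t^{q+m}/(q+m)!) · h_m(x_0, …, x_q)`; by convention it is `0` on the empty tuple. -/
noncomputable def dde (t : ℝ) (l : List ℝ) : ℝ :=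
  if l.length = 0 then 0
  else ∑' m : ℕ, t ^ (l.length - 1 + m) / (Nat.factorial (l.length - 1 + m)) * hsymm l m

/-- The sub-tuple `[x_a, …, x_b]` of the sequence `x`, as a list (empty if `b < a`). -/
def seg (x : ℕ → ℝ) (a b : ℕ) : List ℝ :=
  (List.range (b + 1 - a)).map (fun i => x (a + i))

lemma hsymm_nil (m : ℕ) : hsymm [] m = if m = 0 then 1 else 0 := by
  cases m with
  | zero => simp [hsymm, Finset.Nat.antidiagonalTuple_zero_zero]
  | succ n => simp [hsymm, Finset.Nat.antidiagonalTuple_zero_succ]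
lemma hsymm_zero (l : List ℝ) : hsymm l 0 = 1 := by
  simp [hsymm, Finset.Nat.antidiagonalTuple_zero_right]
lemma hsymm_cons (y : ℝ) (l : List ℝ) (n : ℕ) :
    hsymm (y :: l) n = ∑ k ∈ Finset.range (n + 1), y ^ k * hsymm l (n - k) := by
  classical
  have h0 : hsymm (y :: l) n = ∑ k ∈ Finset.Nat.antidiagonalTuple (l.length + 1) n,
      ∏ i : Fin (l.length + 1), (y :: l).get i ^ k i := rfl
  rw [h0]
  unfold hsymm
  simp only [Finset.mul_sum]
  rw [Finset.sum_sigma']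
  refine Finset.sum_nbij' (i := fun x => ⟨x 0, Fin.tail x⟩) (j := fun p => Fin.cons p.1 p.2)
    ?_ ?_ ?_ ?_ ?_
  · intro x hx
    rw [Finset.Nat.mem_antidiagonalTuple] at hx
    rw [Fin.sum_univ_succ] at hx
    refine Finset.mem_sigma.mpr ⟨?_, ?_⟩
    · simp only [Finset.mem_range]; omega
    · rw [Finset.Nat.mem_antidiagonalTuple]
      show ∑ i : Fin l.length, Fin.tail x i = n - x 0
      have h1 : ∑ i : Fin l.length, Fin.tail x i = ∑ i : Fin l.length, x i.succ :=
        Finset.sum_congr rfl (fun i _ => rfl)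
      rw [h1]; omega
  · intro p hp
    rw [Finset.mem_sigma, Finset.mem_range, Finset.Nat.mem_antidiagonalTuple] at hp
    rw [Finset.Nat.mem_antidiagonalTuple, Fin.sum_univ_succ]
    simp only [Fin.cons_zero, Fin.cons_succ]
    omega
  · intro x _; exact Fin.cons_self_tail x
  · intro p _
    refine Sigma.ext ?_ ?_
    · simp
    · simp [Fin.tail]
  · intro x hx
    rw [Fin.prod_univ_succ]
    simp [Fin.tail, List.get_cons_succ]

lemma sum_triangle (n : ℕ) (f : ℕ → ℕ → ℝ) :
    ∑ k ∈ Finset.range (n + 1), ∑ j ∈ Finset.range (n + 1 - k), f k j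
      = ∑ r ∈ Finset.range (n + 1), ∑ k ∈ Finset.range (r + 1), f k (r - k) := by
  rw [Finset.sum_sigma', Finset.sum_sigma']
  refine Finset.sum_nbij' (i := fun x => ⟨x.1 + x.2, x.1⟩) (j := fun x => ⟨x.2, x.1 - x.2⟩)
    ?_ ?_ ?_ ?_ ?_
  · rintro ⟨k, j⟩ h
    simp only [Finset.mem_sigma, Finset.mem_range] at h ⊢
    omega
  · rintro ⟨r, k⟩ h
    simp only [Finset.mem_sigma, Finset.mem_range] at h ⊢
    omega
  · rintro ⟨k, j⟩ h
    simp only [Finset.mem_sigma, Finset.mem_range] at h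
    have : k + j - k = j := by omega
    simp [this]
  · rintro ⟨r, k⟩ h
    simp only [Finset.mem_sigma, Finset.mem_range] at h
    have : k + (r - k) = r := by omega
    simp [this]
  · rintro ⟨k, j⟩ h
    simp only
    congr 1
    omega
lemma hsymm_singleton (a : ℝ) (n : ℕ) : hsymm [a] n = a ^ n := by
  rw [show ([a] : List ℝ) = a :: [] from rfl, hsymm_cons]
  rw [Finset.sum_eq_single_of_mem n (Finset.self_mem_range_succ n)]
  · simp [hsymm_nil]
  · intro k hk hkn
    rw [Finset.mem_range] at hk
    rw [hsymm_nil, if_neg (by omega)]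
    ring
lemma hsymm_append_single (l : List ℝ) (a : ℝ) (n : ℕ) :
    hsymm (l ++ [a]) n = ∑ k ∈ Finset.range (n + 1), a ^ k * hsymm l (n - k) := by
  induction l generalizing n with
  | nil => simpa using hsymm_cons a [] n
  | cons b l ih =>
    rw [show (b :: l) ++ [a] = b :: (l ++ [a]) from rfl, hsymm_cons]
    have e1 : ∀ k ∈ Finset.range (n + 1),
        b ^ k * hsymm (l ++ [a]) (n - k)
          = ∑ j ∈ Finset.range (n + 1 - k), b ^ k * (a ^ j * hsymm l (n - k - j)) := by
      intro k hk
      rw [Finset.mem_range] at hk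
      rw [ih, Finset.mul_sum]
      rw [show n - k + 1 = n + 1 - k by omega]
    rw [Finset.sum_congr rfl e1, sum_triangle]
    have e2 : ∀ j ∈ Finset.range (n + 1),
        a ^ j * hsymm (b :: l) (n - j)
          = ∑ k ∈ Finset.range (n + 1 - j), a ^ j * (b ^ k * hsymm l (n - j - k)) := by
      intro j hj
      rw [Finset.mem_range] at hj
      rw [hsymm_cons, Finset.mul_sum]
      rw [show n - j + 1 = n + 1 - j by omega]
    rw [Finset.sum_congr rfl e2, sum_triangle]
    apply Finset.sum_congr rfl
    intro r hr
    rw [Finset.mem_range] at hr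
    rw [← Finset.sum_range_reflect]
    apply Finset.sum_congr rfl
    intro u hu
    rw [Finset.mem_range] at hu
    have h1 : r + 1 - 1 - u = r - u := by omega
    have h2 : r - (r - u) = u := by omega
    rw [h1, h2, show n - (r - u) - u = n - u - (r - u) by omega]
    ring

lemma rec_append (l : List ℝ) (a : ℝ) (n : ℕ) :
    hsymm (l ++ [a]) (n + 1) = a * hsymm (l ++ [a]) n + hsymm l (n + 1) := by
  rw [hsymm_append_single, hsymm_append_single, Finset.sum_range_succ' _ (n + 1)]
  simp only [pow_zero, one_mul, Nat.sub_zero, pow_succ]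
  rw [Finset.mul_sum]
  congr 1
  apply Finset.sum_congr rfl
  intro k hk
  rw [show n + 1 - (k + 1) = n - k by omega]
  ring
lemma rec_cons (a : ℝ) (l : List ℝ) (n : ℕ) :
    hsymm (a :: l) (n + 1) = a * hsymm (a :: l) n + hsymm l (n + 1) := by
  rw [hsymm_cons, hsymm_cons, Finset.sum_range_succ' _ (n + 1)]
  simp only [pow_zero, one_mul, Nat.sub_zero, pow_succ]
  rw [Finset.mul_sum]
  congr 1
  apply Finset.sum_congr rfl
  intro k hk
  rw [show n + 1 - (k + 1) = n - k by omega]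
  ring
lemma hsymm_append_pair (l : List ℝ) (a b : ℝ) (n : ℕ) :
    hsymm (l ++ [a, b]) n
      = ∑ r ∈ Finset.range (n + 1),
          (∑ u ∈ Finset.range (r + 1), a ^ u * b ^ (r - u)) * hsymm l (n - r) := by
  rw [show l ++ [a, b] = (l ++ [a]) ++ [b] by simp, hsymm_append_single]
  have e1 : ∀ k ∈ Finset.range (n + 1),
      b ^ k * hsymm (l ++ [a]) (n - k)
        = ∑ j ∈ Finset.range (n + 1 - k), b ^ k * (a ^ j * hsymm l (n - k - j)) := by
    intro k hk
    rw [Finset.mem_range] at hk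
    rw [hsymm_append_single, Finset.mul_sum, show n - k + 1 = n + 1 - k by omega]
  rw [Finset.sum_congr rfl e1, sum_triangle]
  apply Finset.sum_congr rfl
  intro r hr
  rw [Finset.mem_range] at hr
  rw [Finset.sum_mul, ← Finset.sum_range_reflect]
  apply Finset.sum_congr rfl
  intro k hk
  rw [Finset.mem_range] at hk
  rw [show r + 1 - 1 - k = r - k by omega, show r - (r - k) = k by omega,
    show n - (r - k) - k = n - r by omega]
  ring
lemma hsymm_swap (l : List ℝ) (a b : ℝ) (n : ℕ) :
    hsymm (l ++ [a, b]) n = hsymm (l ++ [b, a]) n := by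
  rw [hsymm_append_pair, hsymm_append_pair]
  apply Finset.sum_congr rfl
  intro r _
  congr 1
  rw [← Finset.sum_range_reflect]
  apply Finset.sum_congr rfl
  intro u hu
  rw [Finset.mem_range] at hu
  rw [show r + 1 - 1 - u = r - u by omega, show r - (r - u) = u by omega]
  ring
lemma helper_T (l : List ℝ) (a : ℝ) (n : ℕ) :
    ∑ k ∈ Finset.range (n + 1), a ^ k * hsymm (l ++ [a]) (n - k)
      = ∑ k ∈ Finset.range (n + 1), ((k : ℝ) + 1) * (a ^ k * hsymm l (n - k)) := by
  have e1 : ∀ k ∈ Finset.range (n + 1),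
      a ^ k * hsymm (l ++ [a]) (n - k)
        = ∑ j ∈ Finset.range (n + 1 - k), a ^ k * (a ^ j * hsymm l (n - k - j)) := by
    intro k hk
    rw [Finset.mem_range] at hk
    rw [hsymm_append_single, Finset.mul_sum, show n - k + 1 = n + 1 - k by omega]
  rw [Finset.sum_congr rfl e1, sum_triangle]
  apply Finset.sum_congr rfl
  intro r hr
  rw [Finset.mem_range] at hr
  have e2 : ∀ k ∈ Finset.range (r + 1),
      a ^ k * (a ^ (r - k) * hsymm l (n - k - (r - k))) = a ^ r * hsymm l (n - r) := by
    intro k hk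
    rw [Finset.mem_range] at hk
    rw [show n - k - (r - k) = n - r by omega, ← mul_assoc, ← pow_add,
      show k + (r - k) = r by omega]
  rw [Finset.sum_congr rfl e2, Finset.sum_const, Finset.card_range, nsmul_eq_mul]
  push_cast
  ring
lemma list_sum_finset_sum_comm (L : List ℝ) (s : Finset ℕ) (g : ℝ → ℕ → ℝ) :
    (L.map (fun a => ∑ k ∈ s, g a k)).sum = ∑ k ∈ s, (L.map (fun a => g a k)).sum := by
  induction L with
  | nil => simp
  | cons b L ih => simp [ih, Finset.sum_add_distrib]
lemma newton (L : List ℝ) (n : ℕ) :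
    (L.map (fun a => hsymm (L ++ [a]) n)).sum = ((L.length : ℝ) + n) * hsymm L n := by
  induction L generalizing n with
  | nil =>
    cases n with
    | zero => simp [hsymm_nil]
    | succ n => simp [hsymm_nil]
  | cons b L ih =>
    have key : ∀ a : ℝ, hsymm ((b :: L) ++ [a]) n
        = ∑ k ∈ Finset.range (n + 1), b ^ k * hsymm (L ++ [a]) (n - k) := by
      intro a
      rw [show (b :: L) ++ [a] = b :: (L ++ [a]) from rfl, hsymm_cons]
    simp only [List.map_cons, List.sum_cons, key]
    rw [list_sum_finset_sum_comm L _ (fun a k => b ^ k * hsymm (L ++ [a]) (n - k))]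
    have e1 : ∀ k ∈ Finset.range (n + 1),
        (L.map (fun a => b ^ k * hsymm (L ++ [a]) (n - k))).sum
          = b ^ k * (((L.length : ℝ) + (n - k : ℕ)) * hsymm L (n - k)) := by
      intro k _
      rw [show (fun a => b ^ k * hsymm (L ++ [a]) (n - k))
          = fun a => b ^ k * (fun a => hsymm (L ++ [a]) (n - k)) a from rfl,
        List.sum_map_mul_left, ih]
    rw [Finset.sum_congr rfl e1, helper_T, ← Finset.sum_add_distrib, hsymm_cons,
      Finset.mul_sum]
    apply Finset.sum_congr rfl
    intro k hk
    rw [Finset.mem_range] at hk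
    have : ((n - k : ℕ) : ℝ) = (n : ℝ) - k := by
      rw [Nat.cast_sub (by omega)]
    rw [this]
    push_cast [List.length_cons]
    ring

lemma list_range_map_sum (d : ℕ) (f : ℕ → ℝ) :
    ((List.range d).map f).sum = ∑ j ∈ Finset.range d, f j := by
  induction d with
  | zero => simp
  | succ d ih => rw [List.range_succ, List.map_append, List.sum_append,
      Finset.sum_range_succ, ih]; simp
lemma seg_length (x : ℕ → ℝ) (a b : ℕ) : (seg x a b).length = b + 1 - a := by
  simp [seg]
lemma seg_zero_eq (x : ℕ → ℝ) (q : ℕ) :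
    seg x 0 q = (List.range (q + 1)).map x := by
  simp only [seg, Nat.sub_zero]
  exact List.map_congr_left fun i _ => by rw [Nat.zero_add]
lemma seg_zero_cons (x : ℕ → ℝ) (q : ℕ) : seg x 0 q = x 0 :: seg x 1 q := by
  rw [seg_zero_eq]
  rw [List.range_succ_eq_map, List.map_cons, List.map_map]
  congr 1
  simp only [seg, Nat.add_sub_cancel]
  apply List.map_congr_left
  intro i _
  simp [Nat.succ_eq_add_one, Function.comp]
  congr 1
  omega
lemma newton_idx (q n : ℕ) (x : ℕ → ℝ) :
    ∑ j ∈ Finset.range (q + 1), hsymm (seg x 0 q ++ [x j]) n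
      = ((q : ℝ) + 1 + n) * hsymm (seg x 0 q) n := by
  have h := newton (seg x 0 q) n
  rw [seg_length, seg_zero_eq, List.map_map, list_range_map_sum] at h
  simp only [Function.comp, Nat.sub_zero] at h
  rw [seg_zero_eq, h]
  push_cast
  ring
lemma newton_idx2 (q n i : ℕ) (x : ℕ → ℝ) :
    ∑ j ∈ Finset.range (q + 1), hsymm (seg x 0 q ++ [x i, x j]) n
        + hsymm (seg x 0 q ++ [x i, x i]) n
      = ((q : ℝ) + 2 + n) * hsymm (seg x 0 q ++ [x i]) n := by
  have h := newton (seg x 0 q ++ [x i]) n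
  rw [List.length_append, seg_length] at h
  rw [List.map_append, List.sum_append] at h
  rw [seg_zero_eq, List.map_map, list_range_map_sum] at h
  simp only [Function.comp, List.map_cons, List.map_nil, List.sum_cons, List.sum_nil,
    add_zero, List.append_assoc] at h
  rw [seg_zero_eq]
  simp only [List.singleton_append, List.length_singleton, Nat.sub_zero] at h
  rw [h]
  push_cast
  ring
lemma double_sum (q n : ℕ) (x : ℕ → ℝ) :
    ∑ i ∈ Finset.range (q + 1), ∑ j ∈ Finset.Icc i q, hsymm (seg x 0 q ++ [x i, x j]) n
      = ((q : ℝ) + 1 + n) * ((q : ℝ) + 2 + n) / 2 * hsymm (seg x 0 q) n := by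
  set F : ℕ → ℕ → ℝ := fun i j => hsymm (seg x 0 q ++ [x i, x j]) n with hF
  have Fsymm : ∀ i j, F i j = F j i := fun i j => hsymm_swap _ _ _ _
  have hall : ∑ i ∈ Finset.range (q + 1), ∑ j ∈ Finset.range (q + 1), F i j
      = ((q : ℝ) + 2 + n) * (((q : ℝ) + 1 + n) * hsymm (seg x 0 q) n)
        - ∑ i ∈ Finset.range (q + 1), F i i := by
    have e : ∀ i ∈ Finset.range (q + 1), ∑ j ∈ Finset.range (q + 1), F i j
        = ((q : ℝ) + 2 + n) * hsymm (seg x 0 q ++ [x i]) n - F i i := by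
      intro i _
      have := newton_idx2 q n i x
      simp only [hF]
      linarith [this]
    rw [Finset.sum_congr rfl e, Finset.sum_sub_distrib, ← Finset.mul_sum, newton_idx]
  have hsplit : ∀ i ∈ Finset.range (q + 1),
      ∑ j ∈ Finset.range (q + 1), F i j
        = ∑ j ∈ Finset.range i, F i j + ∑ j ∈ Finset.Icc i q, F i j := by
    intro i hi
    rw [Finset.mem_range] at hi
    rw [Finset.range_eq_Ico, ← Finset.Ico_add_one_right_eq_Icc,
      ← Finset.sum_Ico_consecutive _ (Nat.zero_le i) (by omega : i ≤ q + 1), ← Finset.range_eq_Ico]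
  have hcomm : ∑ i ∈ Finset.range (q + 1), ∑ j ∈ Finset.Icc i q, F i j
      = (∑ i ∈ Finset.range (q + 1), ∑ j ∈ Finset.range i, F i j)
        + ∑ i ∈ Finset.range (q + 1), F i i := by
    have h2 := Finset.sum_Ico_Ico_comm 0 (q + 1) (fun i j => F j i)
    have hL : ∑ i ∈ Finset.Ico 0 (q + 1), ∑ j ∈ Finset.Ico i (q + 1), F j i
        = ∑ i ∈ Finset.range (q + 1), ∑ j ∈ Finset.Icc i q, F i j := by
      rw [← Finset.range_eq_Ico]
      apply Finset.sum_congr rfl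
      intro i _
      rw [Finset.Ico_add_one_right_eq_Icc]
      exact Finset.sum_congr rfl fun j _ => (Fsymm i j).symm ▸ rfl
    have hR : ∑ j ∈ Finset.Ico 0 (q + 1), ∑ i ∈ Finset.Ico 0 (j + 1), F j i
        = (∑ j ∈ Finset.range (q + 1), ∑ i ∈ Finset.range j, F j i)
          + ∑ j ∈ Finset.range (q + 1), F j j := by
      rw [← Finset.range_eq_Ico, ← Finset.sum_add_distrib]
      apply Finset.sum_congr rfl
      intro j _
      rw [← Finset.range_eq_Ico, Finset.sum_range_succ]
    rw [hL, hR] at h2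
    exact h2
  have key : ∑ i ∈ Finset.range (q + 1), ∑ j ∈ Finset.range (q + 1), F i j
      = 2 * (∑ i ∈ Finset.range (q + 1), ∑ j ∈ Finset.Icc i q, F i j)
        - ∑ i ∈ Finset.range (q + 1), F i i := by
    rw [Finset.sum_congr rfl hsplit, Finset.sum_add_distrib]
    rw [hcomm]
    ring
  rw [key] at hall
  linarith [hall]
lemma weight_step (q m i j : ℕ) (x : ℕ → ℝ) :
    x i * hsymm (seg x 0 q ++ [x i, x j]) m
      = hsymm (seg x 0 q ++ [x i, x j]) (m + 1) - hsymm (seg x 0 q ++ [x j]) (m + 1) := by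
  have ha : seg x 0 q ++ [x j, x i] = (seg x 0 q ++ [x j]) ++ [x i] := by simp
  rw [hsymm_swap _ (x i) (x j) m, hsymm_swap _ (x i) (x j) (m + 1), ha, rec_append]
  ring
lemma count_sum (q : ℕ) (B : ℕ → ℝ) :
    ∑ i ∈ Finset.range (q + 1), ∑ j ∈ Finset.Icc i q, B j
      = ∑ j ∈ Finset.range (q + 1), ((j : ℝ) + 1) * B j := by
  have h2 := Finset.sum_Ico_Ico_comm 0 (q + 1) (fun _ j => B j)
  simp only [← Finset.range_eq_Ico] at h2
  calc ∑ i ∈ Finset.range (q + 1), ∑ j ∈ Finset.Icc i q, B j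
      = ∑ i ∈ Finset.range (q + 1), ∑ j ∈ Finset.Ico i (q + 1), B j := by
        apply Finset.sum_congr rfl
        intro i _
        rw [Finset.Ico_add_one_right_eq_Icc]
    _ = ∑ j ∈ Finset.range (q + 1), ∑ _i ∈ Finset.range (j + 1), B j := h2
    _ = ∑ j ∈ Finset.range (q + 1), ((j : ℝ) + 1) * B j := by
        apply Finset.sum_congr rfl
        intro j _
        rw [Finset.sum_const, Finset.card_range, nsmul_eq_mul]
        push_cast
        ring
lemma AI (q m : ℕ) (x : ℕ → ℝ) :
    ∑ i ∈ Finset.range (q + 1), ∑ j ∈ Finset.Icc i q, x i * hsymm (seg x 0 q ++ [x i, x j]) m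
      = ((q : ℝ) + m + 1) * ((q : ℝ) + m + 2) / 2 * hsymm (seg x 0 q) (m + 1)
        - ∑ i ∈ Finset.Icc 1 q, (i : ℝ) * hsymm (seg x 0 q ++ [x i]) (m + 1) := by
  have e1 : ∑ i ∈ Finset.range (q + 1), ∑ j ∈ Finset.Icc i q,
        x i * hsymm (seg x 0 q ++ [x i, x j]) m
      = (∑ i ∈ Finset.range (q + 1), ∑ j ∈ Finset.Icc i q,
          hsymm (seg x 0 q ++ [x i, x j]) (m + 1))
        - ∑ i ∈ Finset.range (q + 1), ∑ j ∈ Finset.Icc i q,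
            hsymm (seg x 0 q ++ [x j]) (m + 1) := by
    rw [← Finset.sum_sub_distrib]
    apply Finset.sum_congr rfl
    intro i _
    rw [← Finset.sum_sub_distrib]
    exact Finset.sum_congr rfl fun j _ => weight_step q m i j x
  rw [e1, double_sum q (m + 1) x,
    count_sum q (fun j => hsymm (seg x 0 q ++ [x j]) (m + 1))]
  have e3 : ∑ i ∈ Finset.Icc 1 q, (i : ℝ) * hsymm (seg x 0 q ++ [x i]) (m + 1)
      = ∑ i ∈ Finset.range (q + 1), (i : ℝ) * hsymm (seg x 0 q ++ [x i]) (m + 1) := by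
    apply Finset.sum_subset
    · intro a ha
      rw [Finset.mem_Icc] at ha
      rw [Finset.mem_range]
      omega
    · intro j hj hnj
      rw [Finset.mem_range] at hj
      rw [Finset.mem_Icc] at hnj
      have : j = 0 := by omega
      simp [this]
  rw [e3]
  have e5 : ∑ j ∈ Finset.range (q + 1), ((j : ℝ) + 1) * hsymm (seg x 0 q ++ [x j]) (m + 1)
      = (∑ j ∈ Finset.range (q + 1), (j : ℝ) * hsymm (seg x 0 q ++ [x j]) (m + 1))
        + ∑ j ∈ Finset.range (q + 1), hsymm (seg x 0 q ++ [x j]) (m + 1) := by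
    rw [← Finset.sum_add_distrib]
    exact Finset.sum_congr rfl fun j _ => by ring
  rw [e5]
  have e4 := newton_idx q (m + 1) x
  push_cast at e4 ⊢
  linear_combination -e4

lemma hsymm_abs_bound (l : List ℝ) (m : ℕ) :
    |hsymm l m| ≤ ((m : ℝ) + 1) ^ l.length * (1 + ∑ i : Fin l.length, |l.get i|) ^ m := by
  set d := l.length
  set R : ℝ := 1 + ∑ i : Fin d, |l.get i| with hR
  have hR1 : 1 ≤ R := by
    rw [hR]
    have : 0 ≤ ∑ i : Fin d, |l.get i| := Finset.sum_nonneg fun i _ => abs_nonneg _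
    linarith
  have hRi : ∀ i : Fin d, |l.get i| ≤ R := by
    intro i
    rw [hR]
    have := Finset.single_le_sum (f := fun i : Fin d => |l.get i|)
      (fun i _ => abs_nonneg _) (Finset.mem_univ i)
    linarith
  have hterm : ∀ k ∈ Finset.Nat.antidiagonalTuple d m,
      |∏ i : Fin d, l.get i ^ k i| ≤ R ^ m := by
    intro k hk
    rw [Finset.Nat.mem_antidiagonalTuple] at hk
    rw [Finset.abs_prod]
    calc ∏ i : Fin d, |l.get i ^ k i| ≤ ∏ i : Fin d, R ^ k i := by
          apply Finset.prod_le_prod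
          · intro i _; positivity
          · intro i _
            rw [abs_pow]
            exact pow_le_pow_left₀ (abs_nonneg _) (hRi i) _
      _ = R ^ m := by rw [Finset.prod_pow_eq_pow_sum, hk]
  have hcard : (Finset.Nat.antidiagonalTuple d m).card ≤ (m + 1) ^ d := by
    have hsub : Finset.Nat.antidiagonalTuple d m
        ⊆ Fintype.piFinset (fun _ : Fin d => Finset.range (m + 1)) := by
      intro k hk
      rw [Finset.Nat.mem_antidiagonalTuple] at hk
      rw [Fintype.mem_piFinset]
      intro i
      rw [Finset.mem_range]
      have := Finset.single_le_sum (f := k) (fun i _ => Nat.zero_le _) (Finset.mem_univ i)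
      omega
    calc (Finset.Nat.antidiagonalTuple d m).card
        ≤ (Fintype.piFinset (fun _ : Fin d => Finset.range (m + 1))).card :=
          Finset.card_le_card hsub
      _ = (m + 1) ^ d := by rw [Fintype.card_piFinset]; simp
  calc |hsymm l m| ≤ ∑ k ∈ Finset.Nat.antidiagonalTuple d m, |∏ i : Fin d, l.get i ^ k i| :=
        Finset.abs_sum_le_sum_abs _ _
    _ ≤ ∑ _k ∈ Finset.Nat.antidiagonalTuple d m, R ^ m := Finset.sum_le_sum hterm
    _ = (Finset.Nat.antidiagonalTuple d m).card * R ^ m := by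
        rw [Finset.sum_const, nsmul_eq_mul]
    _ ≤ ((m : ℝ) + 1) ^ d * R ^ m := by
        have : ((Finset.Nat.antidiagonalTuple d m).card : ℝ) ≤ ((m : ℝ) + 1) ^ d := by
          calc ((Finset.Nat.antidiagonalTuple d m).card : ℝ) ≤ (((m + 1) ^ d : ℕ) : ℝ) := by
                exact_mod_cast hcard
            _ = ((m : ℝ) + 1) ^ d := by push_cast; ring
        apply mul_le_mul_of_nonneg_right this (by positivity)
lemma summable_term (l : List ℝ) (t : ℝ) (c : ℕ) :
    Summable (fun m : ℕ => t ^ (c + m) / (Nat.factorial (c + m)) * hsymm l m) := by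
  set d := l.length
  set R : ℝ := 1 + ∑ i : Fin d, |l.get i| with hR
  have hR1 : 1 ≤ R := by
    have : 0 ≤ ∑ i : Fin d, |l.get i| := Finset.sum_nonneg fun i _ => abs_nonneg _
    rw [hR]; linarith
  set C : ℝ := |t| ^ c * 2 ^ d with hC
  set y : ℝ := 2 ^ d * (R * |t|) with hy
  have hsum : Summable (fun m : ℕ => C * (y ^ m / Nat.factorial m)) :=
    (Real.summable_pow_div_factorial y).mul_left C
  apply Summable.of_norm_bounded hsum
  intro m
  rw [Real.norm_eq_abs, abs_mul, abs_div, abs_pow, Nat.abs_cast]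
  have h1 : |t| ^ (c + m) / (Nat.factorial (c + m) : ℝ) ≤ |t| ^ (c + m) / (Nat.factorial m : ℝ) := by
    apply div_le_div_of_nonneg_left (by positivity) (by positivity)
    exact_mod_cast Nat.factorial_le (by omega : m ≤ c + m)
  have h2 : |hsymm l m| ≤ ((m : ℝ) + 1) ^ d * R ^ m := hsymm_abs_bound l m
  have h3 : ((m : ℝ) + 1) ^ d ≤ 2 ^ d * (2 ^ d) ^ m := by
    have hm : (m : ℝ) + 1 ≤ 2 * 2 ^ m := by
      have h4 : (m : ℕ) + 1 ≤ 2 ^ m := Nat.lt_two_pow_self (n := m)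
      have h5 : (m : ℝ) + 1 ≤ 2 ^ m := by exact_mod_cast h4
      have h6 : (0 : ℝ) < 2 ^ m := by positivity
      linarith
    calc ((m : ℝ) + 1) ^ d ≤ (2 * 2 ^ m) ^ d := by
          apply pow_le_pow_left₀ (by positivity) hm
      _ = 2 ^ d * (2 ^ d) ^ m := by
          rw [mul_pow, ← pow_mul, ← pow_mul, Nat.mul_comm]
  calc |t| ^ (c + m) / (Nat.factorial (c + m) : ℝ) * |hsymm l m|
      ≤ |t| ^ (c + m) / (Nat.factorial m : ℝ) * (((m : ℝ) + 1) ^ d * R ^ m) := by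
        apply mul_le_mul h1 h2 (abs_nonneg _) (by positivity)
    _ ≤ |t| ^ (c + m) / (Nat.factorial m : ℝ) * ((2 ^ d * (2 ^ d) ^ m) * R ^ m) := by
        have := mul_le_mul_of_nonneg_right h3 (by positivity : (0:ℝ) ≤ R ^ m)
        apply mul_le_mul_of_nonneg_left this (by positivity)
    _ = C * (y ^ m / Nat.factorial m) := by
        rw [hC, hy, pow_add, mul_pow, mul_pow]
        field_simp

lemma dde_eq (t : ℝ) (L : List ℝ) (c : ℕ) (h : L.length = c + 1) :
    dde t L = ∑' m : ℕ, t ^ (c + m) / (Nat.factorial (c + m)) * hsymm L m := by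
  rw [dde, if_neg (by omega), h]
  simp

lemma gauss1 (q : ℕ) : ∑ i ∈ Finset.Icc 1 q, (i : ℝ) = q * (q + 1) / 2 := by
  induction q with
  | zero => simp
  | succ q ih =>
    rw [Finset.sum_Icc_succ_top (by omega : 1 ≤ q + 1), ih]
    push_cast; ring

lemma gauss2 (m : ℕ) : ∑ k ∈ Finset.range (m + 1), ((k : ℝ) + 1) = ((m : ℝ) + 1) * ((m : ℝ) + 2) / 2 := by
  induction m with
  | zero => norm_num
  | succ m ih =>
    rw [Finset.sum_range_succ, ih]
    push_cast; ring

lemma hsymm_pair_same (a : ℝ) (r : ℕ) : hsymm [a, a] r = ((r : ℝ) + 1) * a ^ r := by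
  rw [show ([a, a] : List ℝ) = a :: [a] from rfl, hsymm_cons]
  have e : ∀ u ∈ Finset.range (r + 1), a ^ u * hsymm [a] (r - u) = a ^ r := by
    intro u hu
    rw [Finset.mem_range] at hu
    rw [hsymm_singleton, ← pow_add, show u + (r - u) = r by omega]
  rw [Finset.sum_congr rfl e, Finset.sum_const, Finset.card_range, nsmul_eq_mul]
  push_cast; ring

lemma hsymm_triple_same (a : ℝ) (m : ℕ) :
    hsymm [a, a, a] m = ((m : ℝ) + 1) * ((m : ℝ) + 2) / 2 * a ^ m := by
  rw [show ([a, a, a] : List ℝ) = a :: [a, a] from rfl, hsymm_cons]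
  have e : ∀ k ∈ Finset.range (m + 1), a ^ k * hsymm [a, a] (m - k)
      = (((m - k : ℕ) : ℝ) + 1) * a ^ m := by
    intro k hk
    rw [Finset.mem_range] at hk
    rw [hsymm_pair_same]
    calc a ^ k * ((((m - k : ℕ) : ℝ) + 1) * a ^ (m - k))
        = (((m - k : ℕ) : ℝ) + 1) * (a ^ k * a ^ (m - k)) := by ring
      _ = (((m - k : ℕ) : ℝ) + 1) * a ^ m := by
          rw [← pow_add, show k + (m - k) = m by omega]
  rw [Finset.sum_congr rfl e, ← Finset.sum_mul]
  have e2 : ∑ k ∈ Finset.range (m + 1), (((m - k : ℕ) : ℝ) + 1)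
      = ∑ k ∈ Finset.range (m + 1), ((k : ℝ) + 1) := by
    rw [← Finset.sum_range_reflect (fun k => ((k : ℝ) + 1)) (m + 1)]
    apply Finset.sum_congr rfl
    intro k hk
    rw [Finset.mem_range] at hk
    rw [show m + 1 - 1 - k = m - k by omega]
  rw [e2, gauss2]


/-- **Closed form for the weighted, repeated-argument, double, less-than sum**: for every tuple
`(x_0, …, x_q)` and real `τ`, `Σ_{0≤i≤j≤q} x_i e^{-τ[x_0,…,x_q,x_i,x_j]}` equals
`(τ²x_0/2) e^{-τ[x_0,…,x_q]} + (τ²/2) e^{-τ[x_1,…,x_q]} − Σ_{i=1}^q i·e^{-τ[x_0,…,x_q,x_i]}`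
when `q ≥ 1`, and `(τ²x_0/2) e^{-τx_0}` when `q = 0`. -/
theorem weighted_repeated_double_lessthan_sum_closed_form (q : ℕ) (x : ℕ → ℝ) (τ : ℝ) :
    (1 ≤ q →
      ∑ i ∈ Finset.range (q + 1), ∑ j ∈ Finset.Icc i q,
          x i * dde (-τ) (seg x 0 q ++ [x i, x j])
        = (τ ^ 2 * x 0 / 2) * dde (-τ) (seg x 0 q)
          + (τ ^ 2 / 2) * dde (-τ) (seg x 1 q)
          - ∑ i ∈ Finset.Icc 1 q, (i : ℝ) * dde (-τ) (seg x 0 q ++ [x i]))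
    ∧ (q = 0 →
      x 0 * dde (-τ) [x 0, x 0, x 0] = (τ ^ 2 * x 0 / 2) * Real.exp (-τ * x 0)) := by
  constructor
  · intro hq
    obtain ⟨Q, rfl⟩ : ∃ Q, q = Q + 1 := ⟨q - 1, by omega⟩
    have hlen : (seg x 0 (Q + 1)).length = (Q + 1) + 1 := by rw [seg_length]; omega
    have hlen2 : (seg x 1 (Q + 1)).length = Q + 1 := by rw [seg_length]; omega
    have E0 : dde (-τ) (seg x 0 (Q + 1))
        = ∑' m : ℕ, (-τ) ^ (Q + 1 + m) / (Nat.factorial (Q + 1 + m)) * hsymm (seg x 0 (Q + 1)) m :=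
      dde_eq _ _ (Q + 1) hlen
    have E1 : dde (-τ) (seg x 1 (Q + 1))
        = ∑' m : ℕ, (-τ) ^ (Q + m) / (Nat.factorial (Q + m)) * hsymm (seg x 1 (Q + 1)) m :=
      dde_eq _ _ Q hlen2
    have E2 : ∀ i : ℕ, dde (-τ) (seg x 0 (Q + 1) ++ [x i])
        = ∑' m : ℕ, (-τ) ^ (Q + 2 + m) / (Nat.factorial (Q + 2 + m))
            * hsymm (seg x 0 (Q + 1) ++ [x i]) m :=
      fun i => dde_eq _ _ (Q + 2) (by simp [hlen])
    have E3 : ∀ i j : ℕ, dde (-τ) (seg x 0 (Q + 1) ++ [x i, x j])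
        = ∑' m : ℕ, (-τ) ^ (Q + 3 + m) / (Nat.factorial (Q + 3 + m))
            * hsymm (seg x 0 (Q + 1) ++ [x i, x j]) m :=
      fun i j => dde_eq _ _ (Q + 3) (by simp [hlen])
    have S0 := summable_term (seg x 0 (Q + 1)) (-τ) (Q + 1)
    have S1 := summable_term (seg x 1 (Q + 1)) (-τ) Q
    have S2 : ∀ i : ℕ, Summable (fun m : ℕ => (-τ) ^ (Q + 2 + m) / (Nat.factorial (Q + 2 + m))
        * hsymm (seg x 0 (Q + 1) ++ [x i]) m) := fun i => summable_term _ (-τ) (Q + 2)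
    have S3 : ∀ i j : ℕ, Summable (fun m : ℕ => (-τ) ^ (Q + 3 + m) / (Nat.factorial (Q + 3 + m))
        * hsymm (seg x 0 (Q + 1) ++ [x i, x j]) m) := fun i j => summable_term _ (-τ) (Q + 3)
    -- LHS
    have L1 : ∑ i ∈ Finset.range (Q + 1 + 1), ∑ j ∈ Finset.Icc i (Q + 1),
          x i * dde (-τ) (seg x 0 (Q + 1) ++ [x i, x j])
        = ∑' m : ℕ,
            (((Q : ℝ) + m + 2) * ((Q : ℝ) + m + 3) / 2
                * ((-τ) ^ (Q + 3 + m) / (Nat.factorial (Q + 3 + m))) * hsymm (seg x 0 (Q + 1)) (m + 1)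
              - ∑ i ∈ Finset.Icc 1 (Q + 1), (i : ℝ)
                  * ((-τ) ^ (Q + 3 + m) / (Nat.factorial (Q + 3 + m)))
                  * hsymm (seg x 0 (Q + 1) ++ [x i]) (m + 1)) := by
      calc ∑ i ∈ Finset.range (Q + 1 + 1), ∑ j ∈ Finset.Icc i (Q + 1),
            x i * dde (-τ) (seg x 0 (Q + 1) ++ [x i, x j])
          = ∑ i ∈ Finset.range (Q + 1 + 1), ∑' m : ℕ, ∑ j ∈ Finset.Icc i (Q + 1),
              x i * ((-τ) ^ (Q + 3 + m) / (Nat.factorial (Q + 3 + m))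
                * hsymm (seg x 0 (Q + 1) ++ [x i, x j]) m) := by
            apply Finset.sum_congr rfl
            intro i _
            have e : ∀ j ∈ Finset.Icc i (Q + 1), x i * dde (-τ) (seg x 0 (Q + 1) ++ [x i, x j])
                = ∑' m : ℕ, x i * ((-τ) ^ (Q + 3 + m) / (Nat.factorial (Q + 3 + m))
                    * hsymm (seg x 0 (Q + 1) ++ [x i, x j]) m) := by
              intro j _
              rw [E3 i j, ← tsum_mul_left]
            rw [Finset.sum_congr rfl e, ← Summable.tsum_finsetSum (fun j _ => ((S3 i j).mul_left (x i)))]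
        _ = ∑' m : ℕ, ∑ i ∈ Finset.range (Q + 1 + 1), ∑ j ∈ Finset.Icc i (Q + 1),
              x i * ((-τ) ^ (Q + 3 + m) / (Nat.factorial (Q + 3 + m))
                * hsymm (seg x 0 (Q + 1) ++ [x i, x j]) m) := by
            rw [← Summable.tsum_finsetSum (fun i _ => summable_sum (fun j _ => ((S3 i j).mul_left (x i))))]
        _ = ∑' m : ℕ, (-τ) ^ (Q + 3 + m) / (Nat.factorial (Q + 3 + m))
              * ∑ i ∈ Finset.range (Q + 1 + 1), ∑ j ∈ Finset.Icc i (Q + 1),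
                  x i * hsymm (seg x 0 (Q + 1) ++ [x i, x j]) m := by
            apply tsum_congr
            intro m
            rw [Finset.mul_sum]
            apply Finset.sum_congr rfl
            intro i _
            rw [Finset.mul_sum]
            apply Finset.sum_congr rfl
            intro j _
            ring
        _ = _ := by
            apply tsum_congr
            intro m
            rw [AI (Q + 1) m x, mul_sub, Finset.mul_sum]
            congr 1
            · push_cast
              ring
            · apply Finset.sum_congr rfl
              intro i _
              ring
    rw [L1, E0, ← tsum_mul_left]
    -- RHS pieces
    have R2 : (τ ^ 2 / 2) * dde (-τ) (seg x 1 (Q + 1))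
        = (τ ^ 2 / 2) * ((-τ) ^ (Q + 0) / (Nat.factorial (Q + 0)) * hsymm (seg x 1 (Q + 1)) 0)
          + ∑' m : ℕ, (τ ^ 2 / 2) * ((-τ) ^ (Q + (m + 1)) / (Nat.factorial (Q + (m + 1)))
              * hsymm (seg x 1 (Q + 1)) (m + 1)) := by
      rw [E1, Summable.tsum_eq_zero_add S1, mul_add, ← tsum_mul_left]
    have R3 : ∑ i ∈ Finset.Icc 1 (Q + 1), (i : ℝ) * dde (-τ) (seg x 0 (Q + 1) ++ [x i])
        = (∑ i ∈ Finset.Icc 1 (Q + 1), (i : ℝ))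
            * ((-τ) ^ (Q + 2 + 0) / (Nat.factorial (Q + 2 + 0)))
          + ∑' m : ℕ, ∑ i ∈ Finset.Icc 1 (Q + 1), (i : ℝ)
              * ((-τ) ^ (Q + 2 + (m + 1)) / (Nat.factorial (Q + 2 + (m + 1)))
                * hsymm (seg x 0 (Q + 1) ++ [x i]) (m + 1)) := by
      have e : ∀ i ∈ Finset.Icc 1 (Q + 1), (i : ℝ) * dde (-τ) (seg x 0 (Q + 1) ++ [x i])
          = (i : ℝ) * ((-τ) ^ (Q + 2 + 0) / (Nat.factorial (Q + 2 + 0)))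
            + ∑' m : ℕ, (i : ℝ) * ((-τ) ^ (Q + 2 + (m + 1)) / (Nat.factorial (Q + 2 + (m + 1)))
                * hsymm (seg x 0 (Q + 1) ++ [x i]) (m + 1)) := by
        intro i _
        rw [E2 i, Summable.tsum_eq_zero_add (S2 i), mul_add, ← tsum_mul_left]
        congr 2
        rw [hsymm_zero, mul_one]
      rw [Finset.sum_congr rfl e, Finset.sum_add_distrib, ← Finset.sum_mul,
        ← Summable.tsum_finsetSum (fun i _ => (((summable_nat_add_iff 1).mpr (S2 i)).mul_left ((i : ℕ) : ℝ)))]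
    have bdy : (τ ^ 2 / 2) * ((-τ) ^ (Q + 0) / (Nat.factorial (Q + 0)) * hsymm (seg x 1 (Q + 1)) 0)
        = (∑ i ∈ Finset.Icc 1 (Q + 1), (i : ℝ))
            * ((-τ) ^ (Q + 2 + 0) / (Nat.factorial (Q + 2 + 0))) := by
      rw [hsymm_zero, gauss1 (Q + 1), Nat.add_zero, Nat.add_zero]
      have hfq : ((Nat.factorial (Q + 2) : ℝ)) = ((Q : ℝ) + 2) * ((Q : ℝ) + 1) * Nat.factorial Q := by
        rw [show Q + 2 = (Q + 1) + 1 by omega, Nat.factorial_succ, Nat.factorial_succ]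
        push_cast; ring
      have ht2 : (-τ) ^ (Q + 2) = τ ^ 2 * (-τ) ^ Q := by
        rw [pow_add]; ring
      have h1 : ((Q : ℝ) + 1) ≠ 0 := by positivity
      have h2 : ((Q : ℝ) + 2) ≠ 0 := by positivity
      have hf : ((Nat.factorial Q : ℝ)) ≠ 0 := by exact_mod_cast Nat.factorial_ne_zero Q
      rw [hfq, ht2]
      push_cast
      field_simp
      ring
    rw [R2, R3, bdy]
    have SA : Summable (fun m : ℕ => (τ ^ 2 * x 0 / 2)
        * ((-τ) ^ (Q + 1 + m) / (Nat.factorial (Q + 1 + m)) * hsymm (seg x 0 (Q + 1)) m)) :=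
      S0.mul_left _
    have SB : Summable (fun m : ℕ => (τ ^ 2 / 2)
        * ((-τ) ^ (Q + (m + 1)) / (Nat.factorial (Q + (m + 1))) * hsymm (seg x 1 (Q + 1)) (m + 1))) :=
      ((summable_nat_add_iff 1).mpr S1).mul_left _
    have SC : Summable (fun m : ℕ => ∑ i ∈ Finset.Icc 1 (Q + 1), (i : ℝ)
        * ((-τ) ^ (Q + 2 + (m + 1)) / (Nat.factorial (Q + 2 + (m + 1)))
          * hsymm (seg x 0 (Q + 1) ++ [x i]) (m + 1))) :=
      summable_sum (fun i _ => (((summable_nat_add_iff 1).mpr (S2 i)).mul_left _))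
    rw [show ∀ a b c d : ℝ, a + (d + b) - (d + c) = a + b - c from fun a b c d => by ring]
    rw [← Summable.tsum_add SA SB, ← Summable.tsum_sub (SA.add SB) SC]
    apply tsum_congr
    intro m
    -- index normalization
    rw [show Q + (m + 1) = Q + 1 + m by omega, show Q + 2 + (m + 1) = Q + 3 + m by omega]
    -- recurrence for hsymm l (m+1)
    have hLrec : hsymm (seg x 0 (Q + 1)) (m + 1)
        = x 0 * hsymm (seg x 0 (Q + 1)) m + hsymm (seg x 1 (Q + 1)) (m + 1) := by
      rw [seg_zero_cons x (Q + 1), rec_cons]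
    rw [hLrec]
    have hfq : ((Nat.factorial (Q + 3 + m) : ℝ))
        = ((Q : ℝ) + 3 + m) * ((Q : ℝ) + 2 + m) * Nat.factorial (Q + 1 + m) := by
      rw [show Q + 3 + m = ((Q + 1 + m) + 1) + 1 by omega, Nat.factorial_succ, Nat.factorial_succ]
      push_cast; ring
    have ht2 : (-τ) ^ (Q + 3 + m) = τ ^ 2 * (-τ) ^ (Q + 1 + m) := by
      rw [show Q + 3 + m = (Q + 1 + m) + 2 by omega, pow_add]; ring
    have hf : ((Nat.factorial (Q + 1 + m) : ℝ)) ≠ 0 := by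
      exact_mod_cast Nat.factorial_ne_zero (Q + 1 + m)
    have h1 : ((Q : ℝ) + 2 + m) ≠ 0 := by positivity
    have h2 : ((Q : ℝ) + 3 + m) ≠ 0 := by positivity
    have hS : ∑ i ∈ Finset.Icc 1 (Q + 1), (i : ℝ)
          * ((-τ) ^ (Q + 3 + m) / (Nat.factorial (Q + 3 + m)))
          * hsymm (seg x 0 (Q + 1) ++ [x i]) (m + 1)
        = ∑ i ∈ Finset.Icc 1 (Q + 1), (i : ℝ)
          * ((-τ) ^ (Q + 3 + m) / (Nat.factorial (Q + 3 + m))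
            * hsymm (seg x 0 (Q + 1) ++ [x i]) (m + 1)) :=
      Finset.sum_congr rfl fun i _ => by ring
    rw [hS, sub_left_inj, hfq, ht2]
    field_simp
    ring
  · intro _
    rw [dde_eq (-τ) [x 0, x 0, x 0] 2 (by simp), ← tsum_mul_left]
    rw [Real.exp_eq_exp_ℝ, NormedSpace.exp_eq_tsum_div]
    rw [← tsum_mul_left]
    apply tsum_congr
    intro m
    rw [hsymm_triple_same]
    have hfact : ((Nat.factorial (2 + m) : ℝ)) = ((m : ℝ) + 2) * ((m : ℝ) + 1) * Nat.factorial m := by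
      rw [show 2 + m = (m + 1) + 1 by omega, Nat.factorial_succ, Nat.factorial_succ]
      push_cast; ring
    have h2 : (-τ) ^ (2 + m) = τ ^ 2 * (-τ) ^ m := by
      rw [pow_add]; ring
    rw [hfact, h2, mul_pow (-τ) (x 0) m]
    have hm1 : ((m : ℝ) + 1) ≠ 0 := by positivity
    have hm2 : ((m : ℝ) + 2) ≠ 0 := by positivity
    have hmf : ((Nat.factorial m : ℝ)) ≠ 0 := by
      exact_mod_cast Nat.factorial_ne_zero m
    field_simp
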